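/- arXiv:2005.12955 — 2 statements merged into one kernel-verified Lean document; each statement's English description precedes it below -/
import Mathlib

section
/- Let N ≥ 1 be an integer and let u^N : [0,T] → S_N be a differentiable map of real-valued trigonometric polynomials satisfying the semidiscrete Fourier–Galerkin equations (∂_t u^N + u^N ∂_x u^N + ∂_x³ u^N, χ) = 0 for every χ ∈ S_N and every t ∈ [0,T]. Then the discrete Hamiltonian is conserved: the function t ↦ ∫_{−π}^{π} ( (∂_x u^N(t,x))² − (1/3) u^N(t,x)³ ) dx is constant on [0,T]. -/
noncomputable section

namespace KdVSpec

/-- The L² inner product of two real-valued functions on `(-π, π)`. -/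
def L2inner (u v : ℝ → ℝ) : ℝ := ∫ x in (-Real.pi)..Real.pi, u x * v x

/-- The L² norm of a real-valued function on `(-π, π)`. -/
def L2norm (u : ℝ → ℝ) : ℝ := Real.sqrt (∫ x in (-Real.pi)..Real.pi, (u x)^2)

/-- The sup norm of a real-valued function on `[-π, π]`. -/
def LinfNorm (u : ℝ → ℝ) : ℝ := sSup ((fun x => |u x|) '' Set.Icc (-Real.pi) Real.pi)

/-- The `W^{1,∞}` norm `‖v‖_{1,∞} = |v|_∞ + |∂ₓ v|_∞`. -/
def norm1inf (u : ℝ → ℝ) : ℝ := LinfNorm u + LinfNorm (deriv u)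

/-- The `k`-th Fourier coefficient of a (2π-periodic) function on `(-π,π)`. -/
def fCoeff (u : ℝ → ℝ) (k : ℤ) : ℂ :=
  (1 / (2 * Real.pi)) *
    ∫ x in (-Real.pi)..Real.pi, Complex.exp (-(Complex.I * (k : ℂ) * (x : ℂ))) * (u x : ℂ)

/-- The periodic Sobolev norm of order `μ`. -/
def sobNorm (μ : ℝ) (u : ℝ → ℝ) : ℝ :=
  Real.sqrt (∑' k : ℤ, (1 + (k : ℝ)^2) ^ μ * ‖fCoeff u k‖^2)

/-- `v` is a (real-valued) trigonometric polynomial of degree at most `N`,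
i.e. a member of `S_N = span{e^{ikx} : |k| ≤ N}`. -/
def InSN (N : ℕ) (v : ℝ → ℝ) : Prop :=
  ∃ c : ℤ → ℂ, ∀ x : ℝ,
    (v x : ℂ) = ∑ k ∈ Finset.Icc (-(N : ℤ)) (N : ℤ), c k * Complex.exp (Complex.I * (k : ℂ) * (x : ℂ))

/-- The orthogonal L²-projection onto `S_N`, `P_N v = Σ_{|k|≤N} v̂(k) e^{ikx}`. -/
def PN (N : ℕ) (u : ℝ → ℝ) : ℝ → ℝ := fun x =>
  (∑ k ∈ Finset.Icc (-(N : ℤ)) (N : ℤ), fCoeff u k * Complex.exp (Complex.I * (k : ℂ) * (x : ℂ))).re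

/-- Spatial derivative `∂ₓ`. -/
def dx (u : ℝ → ℝ) : ℝ → ℝ := deriv u

/-- Third spatial derivative `∂ₓ³`. -/
def dx3 (u : ℝ → ℝ) : ℝ → ℝ := deriv (deriv (deriv u))

/-- The map `F(v) = -∂ₓ³ v - P_N(v ∂ₓ v)` on `S_N`. -/
def Fmap (N : ℕ) (v : ℝ → ℝ) : ℝ → ℝ := fun x =>
  -(dx3 v x) - PN N (fun y => v y * dx v y) x

/-- `u` solves the periodic KdV equation `u_t + u u_x + u_{xxx} = 0` on the time set `I`
(with 2π-periodicity in space). -/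
def IsKdVSolution (u : ℝ → ℝ → ℝ) (I : Set ℝ) : Prop :=
  (∀ t ∈ I, ∀ x : ℝ, u t (x + 2 * Real.pi) = u t x) ∧
  (∀ t ∈ I, ∀ x : ℝ,
    deriv (fun s => u s x) t + u t x * dx (u t) x + dx3 (u t) x = 0)

/-- `w` is the semidiscrete Fourier–Galerkin approximation (with initial value `P_N u₀`)
on the time set `I`: `w(t) ∈ S_N`, `w` is differentiable in time, `w(0) = P_N u₀` and
`(∂_t w + w ∂ₓ w + ∂ₓ³ w, χ) = 0` for every `χ ∈ S_N`. -/
def SemidiscreteOn (N : ℕ) (u0 : ℝ → ℝ) (w : ℝ → ℝ → ℝ) (I : Set ℝ) : Prop :=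
  (∀ t ∈ I, InSN N (w t)) ∧
  (∀ x : ℝ, ∀ t ∈ I, DifferentiableAt ℝ (fun s => w s x) t) ∧
  (∀ x : ℝ, w 0 x = PN N u0 x) ∧
  (∀ t ∈ I, ∀ χ : ℝ → ℝ, InSN N χ →
    L2inner (fun x => deriv (fun s => w s x) t + w t x * dx (w t) x + dx3 (w t) x) χ = 0)


namespace Aux


open Complex intervalIntegral Finset
local notation "π" => Real.pi

/-- complex exponential `e^{ikx}` -/
def E (k : ℤ) (x : ℝ) : ℂ := Complex.exp (Complex.I * k * x)

lemma E_def (k : ℤ) (x : ℝ) : E k x = Complex.exp (Complex.I * k * x) := rfl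

lemma ofReal_hasDerivAt {x : ℝ} : HasDerivAt (fun y : ℝ => (y : ℂ)) 1 x := by
  exact Complex.ofRealCLM.hasDerivAt (x := x)

lemma E_hasDerivAt (k : ℤ) (x : ℝ) : HasDerivAt (E k) (Complex.I * k * E k x) x := by
  have h : HasDerivAt (fun y : ℝ => Complex.I * k * (y : ℂ)) (Complex.I * k) x := by
    simpa using ofReal_hasDerivAt.const_mul (Complex.I * (k : ℂ))
  have h2 := h.cexp
  have : (fun y : ℝ => Complex.exp (Complex.I * k * (y:ℂ))) = E k := rfl
  rw [this] at h2
  simpa [E, mul_comm] using h2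

lemma E_continuous (k : ℤ) : Continuous (E k) := by
  unfold E; fun_prop

lemma E_add (k m : ℤ) (x : ℝ) : E k x * E m x = E (k + m) x := by
  rw [E, E, E, ← Complex.exp_add]
  push_cast; ring_nf

lemma E_two_pi (k : ℤ) : E k (2 * π) = 1 := by
  rw [E, show Complex.I * (k:ℂ) * ((2 * π : ℝ) : ℂ) = (k:ℂ) * (2 * (π:ℂ) * Complex.I) by push_cast; ring]
  exact Complex.exp_int_mul_two_pi_mul_I k

lemma E_periodic (k : ℤ) (x : ℝ) : E k (x + 2 * π) = E k x := by
  have : E k (x + 2 * π) = E k x * E k (2 * π) := by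
    rw [E, E, E, ← Complex.exp_add]; push_cast; ring_nf
  rw [this, E_two_pi, mul_one]

lemma E_zero (x : ℝ) : E 0 x = 1 := by simp [E]

lemma E_pi_eq (k : ℤ) : E k π = E k (-π) := by
  have := E_periodic k (-π)
  rw [show -π + 2*π = π by ring] at this
  exact this

/-- `∫_{-π}^{π} e^{imx} dx = 2π` if `m = 0` else `0`. -/
lemma integral_E (m : ℤ) :
    (∫ x in (-π)..π, E m x) = if m = 0 then (2 * π : ℂ) else 0 := by
  rcases eq_or_ne m 0 with h | h
  · subst h
    simp only [E_zero, intervalIntegral.integral_const, smul_eq_mul, mul_one, if_pos rfl,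
      sub_neg_eq_add, Complex.real_smul]
    push_cast; ring
  · have hm : (Complex.I * m) ≠ 0 := by
      simp [Complex.I_ne_zero, Complex.ext_iff]
      exact_mod_cast h
    have hder : ∀ x ∈ Set.uIcc (-π) π, HasDerivAt (fun x => (Complex.I * m)⁻¹ * E m x) (E m x) x := by
      intro x _
      have h1 := (E_hasDerivAt m x).const_mul ((Complex.I * (m:ℂ))⁻¹)
      rw [inv_mul_cancel_left₀ hm] at h1
      exact h1
    have hint : IntervalIntegrable (fun x => E m x) MeasureTheory.volume (-π) π :=
      (E_continuous m).intervalIntegrable _ _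
    rw [intervalIntegral.integral_eq_sub_of_hasDerivAt hder hint]
    rw [E_pi_eq m]
    simp [h]






/-- trigonometric polynomial with coefficients `B` supported on `S` -/
def TP (S : Finset ℤ) (B : ℤ → ℂ) (x : ℝ) : ℂ := ∑ k ∈ S, B k * E k x

lemma TP_continuous (S : Finset ℤ) (B : ℤ → ℂ) : Continuous (TP S B) :=
  continuous_finset_sum S fun k _ => (continuous_const.mul (E_continuous k))

lemma TP_hasDerivAt (S : Finset ℤ) (B : ℤ → ℂ) (x : ℝ) :
    HasDerivAt (TP S B) (TP S (fun k => Complex.I * k * B k) x) x := by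
  unfold TP
  refine HasDerivAt.fun_sum fun k _ => ?_
  have := (E_hasDerivAt k x).const_mul (B k)
  convert this using 1
  · rfl
  ring

lemma TP_pi_eq (S : Finset ℤ) (B : ℤ → ℂ) : TP S B π = TP S B (-π) := by
  unfold TP
  exact Finset.sum_congr rfl fun k _ => by rw [E_pi_eq]

lemma integrable_mul_cont {g h : ℝ → ℂ} (hg : Continuous g) (hh : Continuous h) :
    IntervalIntegrable (fun x => g x * h x) MeasureTheory.volume (-π) π :=
  (hg.mul hh).intervalIntegrable _ _

/-- complex Fourier coefficient -/
def fC (g : ℝ → ℂ) (k : ℤ) : ℂ := (2 * π : ℂ)⁻¹ * ∫ x in (-π)..π, g x * E (-k) x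

lemma two_pi_ne : (2 * π : ℂ) ≠ 0 := by
  simp [Complex.ext_iff]

lemma int_E_mul {g : ℝ → ℂ} (hg : Continuous g) (k : ℤ) :
    (∫ x in (-π)..π, E k x * g x) = (2 * π) * fC g (-k) := by
  rw [fC, ← mul_assoc, mul_inv_cancel₀ two_pi_ne, one_mul]
  congr 1; funext x; rw [mul_comm]; norm_num

lemma int_TP_mul {g : ℝ → ℂ} (S : Finset ℤ) (B : ℤ → ℂ) (hg : Continuous g) :
    (∫ x in (-π)..π, TP S B x * g x) = ∑ k ∈ S, B k * ∫ x in (-π)..π, E k x * g x := by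
  unfold TP
  rw [show (fun x => (∑ k ∈ S, B k * E k x) * g x) = fun x => ∑ k ∈ S, B k * (E k x * g x) by
    funext x; rw [Finset.sum_mul]; exact Finset.sum_congr rfl fun k _ => by ring]
  rw [intervalIntegral.integral_finset_sum fun k _ =>
    (continuous_const.fun_mul ((E_continuous k).fun_mul hg)).intervalIntegrable _ _]
  exact Finset.sum_congr rfl fun k _ => intervalIntegral.integral_const_mul _ _

lemma int_TP_mul' {g : ℝ → ℂ} (S : Finset ℤ) (B : ℤ → ℂ) (hg : Continuous g) :
    (∫ x in (-π)..π, TP S B x * g x) = ∑ k ∈ S, B k * ((2*π) * fC g (-k)) := by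
  rw [int_TP_mul S B hg]
  exact Finset.sum_congr rfl fun k _ => by rw [int_E_mul hg]

lemma int_E_mul_TP (S : Finset ℤ) (C : ℤ → ℂ) (k : ℤ) :
    (∫ x in (-π)..π, E k x * TP S C x) =
      ∑ m ∈ S, C m * (if k + m = 0 then (2*π:ℂ) else 0) := by
  unfold TP
  rw [show (fun x => E k x * ∑ m ∈ S, C m * E m x) = fun x => ∑ m ∈ S, C m * E (k + m) x by
    funext x; rw [Finset.mul_sum]; exact Finset.sum_congr rfl fun m _ => by
      rw [← E_add]; ring]
  rw [intervalIntegral.integral_finset_sum fun m _ =>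
    (continuous_const.fun_mul (E_continuous (k+m))).intervalIntegrable _ _]
  exact Finset.sum_congr rfl fun m _ => by
    rw [intervalIntegral.integral_const_mul, integral_E]

lemma sum_collapse (S : Finset ℤ) (C : ℤ → ℂ) (k : ℤ) (h : -k ∈ S) :
    ∑ m ∈ S, C m * (if k + m = 0 then (2*π:ℂ) else 0) = (2*π) * C (-k) := by
  rw [show (fun m => C m * (if k + m = 0 then (2*π:ℂ) else 0)) =
      (fun m => if m = -k then (2*π) * C m else 0) by
    funext m
    by_cases hm : m = -k
    · subst hm; simp; ring
    · rw [if_neg hm, if_neg (by omega), mul_zero]]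
  rw [Finset.sum_ite_eq' S (-k) (fun m => (2*π:ℂ) * C m)]
  exact if_pos h

/-- `P1`: pairing a trig polynomial against `g` only sees the projection of `g`. -/
lemma pair_proj {g : ℝ → ℂ} (S : Finset ℤ) (B : ℤ → ℂ) (hS : ∀ k ∈ S, -k ∈ S)
    (hg : Continuous g) :
    (∫ x in (-π)..π, TP S B x * TP S (fC g) x) = ∫ x in (-π)..π, TP S B x * g x := by
  rw [int_TP_mul' S B hg, int_TP_mul S B (TP_continuous S (fC g))]
  refine Finset.sum_congr rfl fun k hk => ?_
  rw [int_E_mul_TP, sum_collapse S (fC g) k (hS k hk)]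

/-- fundamental-theorem: integral of the derivative of a periodic function vanishes. -/
lemma int_deriv_zero (f f' : ℝ → ℂ) (hd : ∀ x, HasDerivAt f (f' x) x)
    (hc : Continuous f') (hper : f π = f (-π)) :
    (∫ x in (-π)..π, f' x) = 0 := by
  rw [intervalIntegral.integral_eq_sub_of_hasDerivAt (fun x _ => hd x)
    (hc.intervalIntegrable _ _), hper, sub_self]

/-- `P2`: Fourier coefficient of the derivative. -/
lemma fC_deriv (g g' : ℝ → ℂ) (hd : ∀ x, HasDerivAt g (g' x) x) (hc : Continuous g')
    (hper : g π = g (-π)) (k : ℤ) :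
    fC g' k = Complex.I * k * fC g k := by
  have hgc : Continuous g := by
    have : Differentiable ℝ g := fun x => (hd x).differentiableAt
    exact this.continuous
  have key : (∫ x in (-π)..π, (g' x * E (-k) x + g x * (Complex.I * ((-k:ℤ):ℂ) * E (-k) x))) = 0 := by
    refine int_deriv_zero (fun x => g x * E (-k) x) _ (fun x => (hd x).mul (E_hasDerivAt (-k) x))
      ((hc.mul (E_continuous (-k))).add (hgc.mul (continuous_const.mul (E_continuous (-k))))) ?_
    simp only [hper, E_pi_eq]
  rw [intervalIntegral.integral_add (integrable_mul_cont hc (E_continuous (-k)))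
    ((hgc.fun_mul (continuous_const.fun_mul (E_continuous (-k)))).intervalIntegrable _ _)] at key
  have h2 : (∫ x in (-π)..π, g x * (Complex.I * ((-k:ℤ):ℂ) * E (-k) x)) =
      (Complex.I * ((-k:ℤ):ℂ)) * ∫ x in (-π)..π, g x * E (-k) x := by
    rw [← intervalIntegral.integral_const_mul]
    congr 1; funext x; ring
  rw [h2] at key
  have h3 : (∫ x in (-π)..π, g' x * E (-k) x) =
      -(Complex.I * ((-k:ℤ):ℂ)) * ∫ x in (-π)..π, g x * E (-k) x := by
    linear_combination key
  rw [fC, fC, h3]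
  push_cast
  ring





lemma dft_sum (N : ℕ) (d : ℤ) (hd : |d| ≤ 2*N) :
    ∑ j ∈ Finset.range (2*N+1), E d (2*π*j/((2*N+1:ℕ):ℝ)) =
      if d = 0 then ((2*N+1 : ℕ):ℂ) else 0 := by
  set M : ℕ := 2*N+1 with hM
  rcases eq_or_ne d 0 with h | h
  · subst h
    simp [E_zero]
  · rw [if_neg h]
    set z : ℂ := Complex.exp (Complex.I * d * ((2*π/M : ℝ):ℂ)) with hz
    have hterm : ∀ j ∈ Finset.range M, E d (2*π*j/M) = z ^ j := by
      intro j _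
      rw [E_def, hz, ← Complex.exp_nat_mul]
      congr 1
      push_cast
      have hM0 : ((M:ℕ):ℂ) ≠ 0 := Nat.cast_ne_zero.mpr (by omega)
      field_simp
    rw [Finset.sum_congr rfl hterm]
    have hMpos : (0:ℤ) < (M:ℤ) := by omega
    have hz1 : z ≠ 1 := by
      intro hcon
      rw [hz, Complex.exp_eq_one_iff] at hcon
      obtain ⟨n, hn⟩ := hcon
      have hπ : (π:ℂ) ≠ 0 := by exact_mod_cast Real.pi_ne_zero
      have hM0 : ((M:ℕ):ℂ) ≠ 0 := Nat.cast_ne_zero.mpr (by omega)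
      have hd' : (d:ℂ) = (n:ℂ) * (M:ℂ) := by
        push_cast at hn
        have hI := Complex.I_ne_zero
        have hπ2 : (π:ℂ) ≠ 0 := hπ
        have hne : (2*(N:ℂ)+1) ≠ 0 := by
          have h9 : ((2*N+1:ℕ):ℂ) = 2*(N:ℂ)+1 := by push_cast; ring
          rw [← h9]; exact Nat.cast_ne_zero.mpr (by omega)
        field_simp at hn
        have hc : (2*(π:ℂ)*Complex.I) ≠ 0 :=
          mul_ne_zero (mul_ne_zero two_ne_zero hπ) Complex.I_ne_zero
        apply mul_left_cancel₀ hc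
        push_cast
        linear_combination (2*(π:ℂ)*Complex.I) * hn
      have hdz : d = n * (M:ℤ) := by exact_mod_cast hd'
      have : (M:ℤ) ∣ d := ⟨n, by rw [hdz]; ring⟩
      have h1 : (M:ℤ) ≤ |d| := Int.le_of_dvd (abs_pos.mpr h) ((dvd_abs _ _).mpr this)
      omega
    rw [geom_sum_eq hz1]
    have hzM : z ^ M = 1 := by
      rw [hz, ← Complex.exp_nat_mul]
      have hM0 : ((M:ℕ):ℂ) ≠ 0 := Nat.cast_ne_zero.mpr (by omega)
      rw [show ((M:ℕ):ℂ) * (Complex.I * d * ((2*π/(M:ℕ) : ℝ):ℂ)) = d * (2*π*Complex.I) by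
        push_cast
        have hne : (2*(N:ℂ)+1) ≠ 0 := by
          have h9 : ((2*N+1:ℕ):ℂ) = 2*(N:ℂ)+1 := by push_cast; ring
          rw [← h9]; exact Nat.cast_ne_zero.mpr (by omega)
        field_simp]
      exact Complex.exp_int_mul_two_pi_mul_I d
    rw [hzM, sub_self, zero_div]

lemma hasDerivAt_re {f : ℝ → ℂ} {f' : ℂ} {x : ℝ} (hf : HasDerivAt f f' x) :
    HasDerivAt (fun y => (f y).re) f'.re x := by
  exact
    (Complex.reCLM.hasFDerivAt (x := f x)).comp_hasDerivAt x hf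

lemma hasDerivAt_im {f : ℝ → ℂ} {f' : ℂ} {x : ℝ} (hf : HasDerivAt f f' x) :
    HasDerivAt (fun y => (f y).im) f'.im x := by
  exact
    (Complex.imCLM.hasFDerivAt (x := f x)).comp_hasDerivAt x hf

lemma hasDerivAt_ofReal {f : ℝ → ℝ} {f' : ℝ} {x : ℝ} (hf : HasDerivAt f f' x) :
    HasDerivAt (fun y => (f y : ℂ)) (f' : ℂ) x := by
  exact
    (Complex.ofRealCLM.hasFDerivAt (x := f x)).comp_hasDerivAt x hf

/-- spatial derivative step: if a real function is given by a trig polynomial,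
its derivative is given by the differentiated trig polynomial. -/
lemma re_deriv_step (S : Finset ℤ) (B : ℤ → ℂ) (f : ℝ → ℝ)
    (hf : ∀ x, (f x : ℂ) = TP S B x) :
    ∀ x, ((deriv f x : ℝ) : ℂ) = TP S (fun k => Complex.I * k * B k) x := by
  intro x
  have him : ∀ y, (TP S B y).im = 0 := fun y => by rw [← hf y]; simp
  have hfeq : f = fun y => (TP S B y).re := funext fun y => by rw [← hf y]; simp
  have h1 : deriv f x = (TP S (fun k => Complex.I * k * B k) x).re := by
    rw [hfeq]
    exact (hasDerivAt_re (TP_hasDerivAt S B x)).deriv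
  have h2 : (TP S (fun k => Complex.I * k * B k) x).im = 0 := by
    have h3 := (hasDerivAt_im (TP_hasDerivAt S B x)).deriv
    have h4 : (fun y => (TP S B y).im) = fun _ => 0 := funext him
    rw [h4, deriv_const] at h3
    exact h3.symm
  apply Complex.ext
  · simpa using h1
  · simpa using h2.symm

/-- equality of `deriv`s of functions agreeing on a set with unique differentiability. -/
lemma deriv_eq_of_eqOn {f g : ℝ → ℂ} {s : Set ℝ} {t : ℝ}
    (hs : UniqueDiffWithinAt ℝ s t) (ht : t ∈ s) (heq : ∀ y ∈ s, f y = g y)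
    (hf : DifferentiableAt ℝ f t) (hg : DifferentiableAt ℝ g t) :
    deriv f t = deriv g t := by
  rw [← hf.derivWithin hs, ← hg.derivWithin hs]
  exact derivWithin_congr heq (heq t ht)

/-- expansion of `∫ TP·TP` as a double sum. -/
lemma int_TP_mul_TP (S : Finset ℤ) (B C : ℤ → ℂ) :
    (∫ x in (-π)..π, TP S B x * TP S C x) =
      ∑ k ∈ S, ∑ m ∈ S, B k * C m * (if k + m = 0 then (2*π:ℂ) else 0) := by
  rw [int_TP_mul S B (TP_continuous S C)]
  refine Finset.sum_congr rfl fun k _ => ?_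
  rw [int_E_mul_TP, Finset.mul_sum]
  exact Finset.sum_congr rfl fun m _ => by ring

lemma int_E_mul_TP_sq (S : Finset ℤ) (C D : ℤ → ℂ) (j : ℤ) :
    (∫ x in (-π)..π, E j x * (TP S C x * TP S D x)) =
      ∑ k ∈ S, ∑ m ∈ S, C k * D m * (if j + k + m = 0 then (2*π:ℂ) else 0) := by
  have hpt : (fun x => E j x * (TP S C x * TP S D x)) =
      fun x => ∑ k ∈ S, ∑ m ∈ S, C k * D m * E (j + k + m) x := by
    funext x
    unfold TP
    rw [Finset.sum_mul_sum, Finset.mul_sum]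
    refine Finset.sum_congr rfl fun k _ => ?_
    rw [Finset.mul_sum]
    refine Finset.sum_congr rfl fun m _ => ?_
    rw [show E j x * (C k * E k x * (D m * E m x)) =
      C k * D m * (E j x * E k x * E m x) by ring, E_add, E_add]
  rw [hpt]
  rw [intervalIntegral.integral_finset_sum fun k _ => ?_]
  · refine Finset.sum_congr rfl fun k _ => ?_
    rw [intervalIntegral.integral_finset_sum fun m _ =>
      (continuous_const.fun_mul (E_continuous (j+k+m))).intervalIntegrable _ _]
    refine Finset.sum_congr rfl fun m _ => ?_
    rw [intervalIntegral.integral_const_mul, integral_E]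
  · exact (continuous_finset_sum S fun m _ =>
      continuous_const.mul (E_continuous (j+k+m))).intervalIntegrable _ _

/-- expansion of a triple product integral as a triple sum. -/
lemma int_TP_cube (S : Finset ℤ) (B C D : ℤ → ℂ) :
    (∫ x in (-π)..π, TP S B x * (TP S C x * TP S D x)) =
      ∑ j ∈ S, ∑ k ∈ S, ∑ m ∈ S,
        B j * C k * D m * (if j + k + m = 0 then (2*π:ℂ) else 0) := by
  rw [int_TP_mul S B ((TP_continuous S C).fun_mul (TP_continuous S D))]
  refine Finset.sum_congr rfl fun j _ => ?_
  rw [int_E_mul_TP_sq, Finset.mul_sum]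
  refine Finset.sum_congr rfl fun k _ => ?_
  rw [Finset.mul_sum]
  refine Finset.sum_congr rfl fun m _ => by ring

lemma sum_swap13 {β : Type*} [AddCommMonoid β] (s : Finset ℤ) (F : ℤ → ℤ → ℤ → β) :
    (∑ j ∈ s, ∑ k ∈ s, ∑ m ∈ s, F j k m) = ∑ j ∈ s, ∑ k ∈ s, ∑ m ∈ s, F m k j :=
  calc (∑ j ∈ s, ∑ k ∈ s, ∑ m ∈ s, F j k m)
      = ∑ k ∈ s, ∑ j ∈ s, ∑ m ∈ s, F j k m := Finset.sum_comm
    _ = ∑ k ∈ s, ∑ m ∈ s, ∑ j ∈ s, F j k m := Finset.sum_congr rfl fun k _ => Finset.sum_comm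
    _ = ∑ m ∈ s, ∑ k ∈ s, ∑ j ∈ s, F j k m := Finset.sum_comm

lemma sum_swap23 {β : Type*} [AddCommMonoid β] (s : Finset ℤ) (F : ℤ → ℤ → ℤ → β) :
    (∑ j ∈ s, ∑ k ∈ s, ∑ m ∈ s, F j k m) = ∑ j ∈ s, ∑ k ∈ s, ∑ m ∈ s, F j m k :=
  Finset.sum_congr rfl fun j _ => Finset.sum_comm

lemma sum_swap2 {β : Type*} [AddCommMonoid β] (s : Finset ℤ) (F : ℤ → ℤ → β) :
    (∑ j ∈ s, ∑ k ∈ s, F j k) = ∑ j ∈ s, ∑ k ∈ s, F k j := Finset.sum_comm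

lemma E_pos_formula (k : ℤ) (x : ℝ) :
    E k x = ((Real.cos ((k:ℝ)*x) : ℝ):ℂ) + Complex.I * ((Real.sin ((k:ℝ)*x):ℝ):ℂ) := by
  rw [E_def]
  rw [show Complex.I * (k:ℂ) * (x:ℂ) = (((k:ℝ)*x : ℝ):ℂ) * Complex.I by push_cast; ring]
  rw [Complex.exp_mul_I, ← Complex.ofReal_cos, ← Complex.ofReal_sin]
  ring

lemma E_neg_formula (k : ℤ) (x : ℝ) :
    E (-k) x = ((Real.cos ((k:ℝ)*x) : ℝ):ℂ) - Complex.I * ((Real.sin ((k:ℝ)*x):ℝ):ℂ) := by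
  rw [E_def]
  rw [show Complex.I * ((-k:ℤ):ℂ) * (x:ℂ) = ((-((k:ℝ)*x) : ℝ):ℂ) * Complex.I by push_cast; ring]
  rw [Complex.exp_mul_I, Complex.ofReal_neg, Complex.cos_neg, Complex.sin_neg,
    ← Complex.ofReal_cos, ← Complex.ofReal_sin]
  ring

/-- the index set `S_N` -/
def KS (N : ℕ) : Finset ℤ := Finset.Icc (-(N:ℤ)) (N:ℤ)

lemma KS_symm (N : ℕ) : ∀ k ∈ KS N, -k ∈ KS N := by
  intro k hk
  simp only [KS, Finset.mem_Icc] at *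
  omega

def xjf (N : ℕ) (j : ℕ) : ℝ := 2*π*j/((2*N+1:ℕ):ℝ)

def sampC (N : ℕ) (v : ℝ → ℝ) (k : ℤ) : ℂ :=
  ((2*N+1:ℕ):ℂ)⁻¹ * ∑ j ∈ Finset.range (2*N+1), E (-k) (xjf N j) * (v (xjf N j) : ℂ)

lemma sampC_eq_coeff {N : ℕ} {v : ℝ → ℝ} {c : ℤ → ℂ}
    (hc : ∀ x : ℝ, (v x : ℂ) = TP (KS N) c x) {k : ℤ} (hk : k ∈ KS N) :
    sampC N v k = c k := by
  unfold sampC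
  have hMne : ((2*N+1:ℕ):ℂ) ≠ 0 := Nat.cast_ne_zero.mpr (by omega)
  have h1 : ∀ j ∈ Finset.range (2*N+1), E (-k) (xjf N j) * (v (xjf N j) : ℂ)
      = ∑ m ∈ KS N, c m * E (-k + m) (xjf N j) := by
    intro j _
    rw [hc, TP, Finset.mul_sum]
    exact Finset.sum_congr rfl fun m _ => by rw [← E_add]; ring
  rw [Finset.sum_congr rfl h1, Finset.sum_comm]
  have h2 : ∀ m ∈ KS N, (∑ j ∈ Finset.range (2*N+1), c m * E (-k + m) (xjf N j))
      = c m * (if (-k+m) = 0 then ((2*N+1:ℕ):ℂ) else 0) := by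
    intro m hm
    rw [← Finset.mul_sum]
    congr 1
    have habs : |(-k+m)| ≤ 2*N := by
      simp only [KS, Finset.mem_Icc] at hk hm
      rw [abs_le]; omega
    have := dft_sum N (-k+m) (by exact_mod_cast habs)
    simpa [xjf] using this
  rw [Finset.sum_congr rfl h2]
  have h3 : ∀ m ∈ KS N, (c m * (if (-k+m) = 0 then ((2*N+1:ℕ):ℂ) else 0))
      = if m = k then ((2*N+1:ℕ):ℂ) * c m else 0 := by
    intro m _
    by_cases hm : m = k
    · subst hm; rw [if_pos (by omega), if_pos rfl]; ring
    · rw [if_neg (by omega), if_neg hm, mul_zero]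
  rw [Finset.sum_congr rfl h3, Finset.sum_ite_eq' (KS N) k, if_pos hk,
    ← mul_assoc, inv_mul_cancel₀ hMne, one_mul]

lemma rep_of_InSN {N : ℕ} {v : ℝ → ℝ} (h : InSN N v) :
    ∀ x : ℝ, (v x : ℂ) = TP (KS N) (sampC N v) x := by
  obtain ⟨c, hc⟩ := h
  have hc' : ∀ x, (v x : ℂ) = TP (KS N) c x := hc
  intro x
  rw [hc' x]
  exact (Finset.sum_congr rfl fun k hk => by rw [sampC_eq_coeff hc' hk]).symm

def ccos (k : ℤ) : ℤ → ℂ := fun m =>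
  (if m = k then (2:ℂ)⁻¹ else 0) + (if m = -k then (2:ℂ)⁻¹ else 0)

def csin (k : ℤ) : ℤ → ℂ := fun m =>
  (if m = k then (2*Complex.I)⁻¹ else 0) - (if m = -k then (2*Complex.I)⁻¹ else 0)

lemma TP_ccos {N : ℕ} {k : ℤ} (hk : k ∈ KS N) (x : ℝ) :
    TP (KS N) (ccos k) x = ((Real.cos ((k:ℝ)*x) : ℝ):ℂ) := by
  have hk' : -k ∈ KS N := KS_symm N k hk
  unfold TP
  have h1 : ∀ m ∈ KS N, ccos k m * E m x =
      (if m = k then (2:ℂ)⁻¹ * E m x else 0) + (if m = -k then (2:ℂ)⁻¹ * E m x else 0) := by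
    intro m _; unfold ccos; split_ifs <;> ring
  rw [Finset.sum_congr rfl h1, Finset.sum_add_distrib, Finset.sum_ite_eq' (KS N) k,
    Finset.sum_ite_eq' (KS N) (-k), if_pos hk, if_pos hk', E_pos_formula, E_neg_formula]
  ring

lemma TP_csin {N : ℕ} {k : ℤ} (hk : k ∈ KS N) (x : ℝ) :
    TP (KS N) (csin k) x = ((Real.sin ((k:ℝ)*x) : ℝ):ℂ) := by
  have hk' : -k ∈ KS N := KS_symm N k hk
  unfold TP
  have h1 : ∀ m ∈ KS N, csin k m * E m x =
      (if m = k then (2*Complex.I)⁻¹ * E m x else 0) -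
        (if m = -k then (2*Complex.I)⁻¹ * E m x else 0) := by
    intro m _; unfold csin; split_ifs <;> ring
  rw [Finset.sum_congr rfl h1, Finset.sum_sub_distrib, Finset.sum_ite_eq' (KS N) k,
    Finset.sum_ite_eq' (KS N) (-k), if_pos hk, if_pos hk', E_pos_formula, E_neg_formula]
  have hI := Complex.I_ne_zero
  field_simp
  ring

/-- derivative coefficients -/
def d1 (B : ℤ → ℂ) : ℤ → ℂ := fun k => Complex.I * k * B k

lemma TP_hasDerivAt' (S : Finset ℤ) (B : ℤ → ℂ) (x : ℝ) :
    HasDerivAt (TP S B) (TP S (d1 B) x) x := TP_hasDerivAt S B x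

lemma int_add3 (f g h : ℝ → ℂ) (hf : Continuous f) (hg : Continuous g) (hh : Continuous h) :
    (∫ x in (-π)..π, (f x + g x + h x)) =
      (∫ x in (-π)..π, f x) + (∫ x in (-π)..π, g x) + (∫ x in (-π)..π, h x) := by
  rw [intervalIntegral.integral_add ((hf.fun_add hg).intervalIntegrable _ _)
    (hh.intervalIntegrable _ _),
    intervalIntegral.integral_add (hf.intervalIntegrable _ _) (hg.intervalIntegrable _ _)]

lemma int_add2 (f g : ℝ → ℂ) (hf : Continuous f) (hg : Continuous g) :
    (∫ x in (-π)..π, (f x + g x)) = (∫ x in (-π)..π, f x) + (∫ x in (-π)..π, g x) :=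
  intervalIntegral.integral_add (hf.intervalIntegrable _ _) (hg.intervalIntegrable _ _)

/-- The heart of the conservation argument. -/
lemma piece5 (S : Finset ℤ) (hS : ∀ k ∈ S, -k ∈ S) (A A' : ℤ → ℂ)
    (hgal : ∀ W : ℤ → ℂ, (∫ x in (-π)..π,
      (TP S A' x + TP S A x * TP S (d1 A) x + TP S (d1 (d1 (d1 A))) x) * TP S W x) = 0) :
    2 * (∫ x in (-π)..π, TP S (d1 A) x * TP S (d1 A') x)
      - (∫ x in (-π)..π, TP S A x * (TP S A x * TP S A' x)) = 0 := by
  have cu : Continuous (TP S A) := TP_continuous _ _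
  have cux : Continuous (TP S (d1 A)) := TP_continuous _ _
  have cuxx : Continuous (TP S (d1 (d1 A))) := TP_continuous _ _
  have cuxxx : Continuous (TP S (d1 (d1 (d1 A)))) := TP_continuous _ _
  have cut : Continuous (TP S A') := TP_continuous _ _
  have cuxt : Continuous (TP S (d1 A')) := TP_continuous _ _
  have cg2 : Continuous (fun x => TP S A x * TP S A x) := cu.mul cu
  have cg2' : Continuous (fun x => TP S (d1 A) x * TP S A x + TP S A x * TP S (d1 A) x) :=
    (cux.mul cu).add (cu.mul cux)
  have cp2 : Continuous (TP S (fC (fun x => TP S A x * TP S A x))) := TP_continuous _ _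
  have cp2x : Continuous (TP S (d1 (fC (fun x => TP S A x * TP S A x)))) := TP_continuous _ _
  -- integration by parts identities
  have ibp1 : (∫ x in (-π)..π,
      (TP S (d1 (d1 A)) x * TP S A' x + TP S (d1 A) x * TP S (d1 A') x)) = 0 :=
    int_deriv_zero (fun x => TP S (d1 A) x * TP S A' x) _
      (fun x => (TP_hasDerivAt' S (d1 A) x).mul (TP_hasDerivAt' S A' x))
      ((cuxx.mul cut).add (cux.mul cuxt)) (by simp only [TP_pi_eq])
  have ibp2 : (∫ x in (-π)..π,
      (TP S (d1 (d1 (d1 A))) x * TP S (d1 (d1 A)) x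
        + TP S (d1 (d1 A)) x * TP S (d1 (d1 (d1 A))) x)) = 0 :=
    int_deriv_zero (fun x => TP S (d1 (d1 A)) x * TP S (d1 (d1 A)) x) _
      (fun x => (TP_hasDerivAt' S (d1 (d1 A)) x).mul (TP_hasDerivAt' S (d1 (d1 A)) x))
      ((cuxxx.mul cuxx).add (cuxx.mul cuxxx)) (by simp only [TP_pi_eq])
  have ibp3 : (∫ x in (-π)..π,
      (TP S (d1 (d1 (d1 A))) x * (TP S A x * TP S A x)
        + TP S (d1 (d1 A)) x * (TP S (d1 A) x * TP S A x + TP S A x * TP S (d1 A) x))) = 0 :=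
    int_deriv_zero (fun x => TP S (d1 (d1 A)) x * (TP S A x * TP S A x)) _
      (fun x => (TP_hasDerivAt' S (d1 (d1 A)) x).mul
        ((TP_hasDerivAt' S A x).mul (TP_hasDerivAt' S A x)))
      ((cuxxx.mul cg2).add (cuxx.mul cg2')) (by simp only [TP_pi_eq])
  have ibp4 : (∫ x in (-π)..π,
      (TP S (d1 (fC (fun x => TP S A x * TP S A x))) x
          * TP S (fC (fun x => TP S A x * TP S A x)) x
        + TP S (fC (fun x => TP S A x * TP S A x)) x
          * TP S (d1 (fC (fun x => TP S A x * TP S A x))) x)) = 0 :=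
    int_deriv_zero (fun x => TP S (fC (fun x => TP S A x * TP S A x)) x
        * TP S (fC (fun x => TP S A x * TP S A x)) x) _
      (fun x => (TP_hasDerivAt' S _ x).mul (TP_hasDerivAt' S _ x))
      ((cp2x.mul cp2).add (cp2.mul cp2x)) (by simp only [TP_pi_eq])
  -- pairing identities
  have pr1 : (∫ x in (-π)..π, TP S A' x * TP S (fC (fun x => TP S A x * TP S A x)) x)
      = ∫ x in (-π)..π, TP S A' x * (TP S A x * TP S A x) :=
    pair_proj S A' hS cg2
  have pr2 : (∫ x in (-π)..π,
      TP S (d1 (d1 (d1 A))) x * TP S (fC (fun x => TP S A x * TP S A x)) x)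
      = ∫ x in (-π)..π, TP S (d1 (d1 (d1 A))) x * (TP S A x * TP S A x) :=
    pair_proj S (d1 (d1 (d1 A))) hS cg2
  have fCd : ∀ k : ℤ, fC (fun x => TP S (d1 A) x * TP S A x + TP S A x * TP S (d1 A) x) k
      = Complex.I * k * fC (fun x => TP S A x * TP S A x) k :=
    fC_deriv (fun x => TP S A x * TP S A x) _
      (fun x => (TP_hasDerivAt' S A x).mul (TP_hasDerivAt' S A x)) cg2'
      (by simp only [TP_pi_eq])
  have pTPeq : TP S (fC (fun x => TP S (d1 A) x * TP S A x + TP S A x * TP S (d1 A) x))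
      = TP S (d1 (fC (fun x => TP S A x * TP S A x))) := by
    funext x
    exact Finset.sum_congr rfl fun k _ => by rw [fCd k]; rfl
  have pr3 : (∫ x in (-π)..π, TP S (fC (fun x => TP S A x * TP S A x)) x
        * (TP S (d1 A) x * TP S A x + TP S A x * TP S (d1 A) x))
      = ∫ x in (-π)..π, TP S (fC (fun x => TP S A x * TP S A x)) x
        * TP S (d1 (fC (fun x => TP S A x * TP S A x))) x := by
    rw [← pair_proj S (fC (fun x => TP S A x * TP S A x)) hS cg2', pTPeq]
  -- Galerkin identities
  have gal1 := hgal (d1 (d1 A))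
  have gal2 := hgal (fC (fun x => TP S A x * TP S A x))
  have gal1' : (∫ x in (-π)..π, (TP S A' x * TP S (d1 (d1 A)) x
      + (TP S A x * TP S (d1 A) x) * TP S (d1 (d1 A)) x
      + TP S (d1 (d1 (d1 A))) x * TP S (d1 (d1 A)) x)) = 0 := by
    rw [show (fun x => TP S A' x * TP S (d1 (d1 A)) x
      + (TP S A x * TP S (d1 A) x) * TP S (d1 (d1 A)) x
      + TP S (d1 (d1 (d1 A))) x * TP S (d1 (d1 A)) x) = fun x =>
        (TP S A' x + TP S A x * TP S (d1 A) x + TP S (d1 (d1 (d1 A))) x)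
          * TP S (d1 (d1 A)) x from funext fun x => by ring]
    exact gal1
  have gal2' : (∫ x in (-π)..π, (TP S A' x * TP S (fC (fun x => TP S A x * TP S A x)) x
      + (TP S A x * TP S (d1 A) x) * TP S (fC (fun x => TP S A x * TP S A x)) x
      + TP S (d1 (d1 (d1 A))) x * TP S (fC (fun x => TP S A x * TP S A x)) x)) = 0 := by
    rw [show (fun x => TP S A' x * TP S (fC (fun x => TP S A x * TP S A x)) x
      + (TP S A x * TP S (d1 A) x) * TP S (fC (fun x => TP S A x * TP S A x)) x
      + TP S (d1 (d1 (d1 A))) x * TP S (fC (fun x => TP S A x * TP S A x)) x) = fun x =>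
        (TP S A' x + TP S A x * TP S (d1 A) x + TP S (d1 (d1 (d1 A))) x)
          * TP S (fC (fun x => TP S A x * TP S A x)) x from funext fun x => by ring]
    exact gal2
  -- split all the integrals
  rw [int_add3 _ _ _ (cut.fun_mul cuxx) ((cu.fun_mul cux).fun_mul cuxx) (cuxxx.fun_mul cuxx)] at gal1'
  rw [int_add3 _ _ _ (cut.fun_mul cp2) ((cu.fun_mul cux).fun_mul cp2) (cuxxx.fun_mul cp2)] at gal2'
  rw [int_add2 _ _ (cuxx.fun_mul cut) (cux.fun_mul cuxt)] at ibp1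
  rw [int_add2 _ _ (cuxxx.fun_mul cuxx) (cuxx.fun_mul cuxxx)] at ibp2
  rw [int_add2 _ _ (cuxxx.fun_mul cg2) (cuxx.fun_mul cg2')] at ibp3
  rw [int_add2 _ _ (cp2x.fun_mul cp2) (cp2.fun_mul cp2x)] at ibp4
  -- commutation identities between the scalar integrals
  have comm1 : (∫ x in (-π)..π, TP S (d1 (d1 A)) x * TP S (d1 (d1 (d1 A))) x)
      = ∫ x in (-π)..π, TP S (d1 (d1 (d1 A))) x * TP S (d1 (d1 A)) x := by
    exact intervalIntegral.integral_congr fun x _ => by ring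
  have comm2 : (∫ x in (-π)..π, TP S (d1 (d1 A)) x * TP S A' x)
      = ∫ x in (-π)..π, TP S A' x * TP S (d1 (d1 A)) x :=
    intervalIntegral.integral_congr fun x _ => by ring
  have comm3 : (∫ x in (-π)..π, TP S (d1 (fC (fun x => TP S A x * TP S A x))) x
        * TP S (fC (fun x => TP S A x * TP S A x)) x)
      = ∫ x in (-π)..π, TP S (fC (fun x => TP S A x * TP S A x)) x
        * TP S (d1 (fC (fun x => TP S A x * TP S A x))) x :=
    intervalIntegral.integral_congr fun x _ => by ring
  -- split pr3's left side
  have pr3' : (∫ x in (-π)..π, TP S (fC (fun x => TP S A x * TP S A x)) x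
        * (TP S (d1 A) x * TP S A x + TP S A x * TP S (d1 A) x))
      = (∫ x in (-π)..π, TP S (fC (fun x => TP S A x * TP S A x)) x
          * (TP S (d1 A) x * TP S A x))
        + ∫ x in (-π)..π, TP S (fC (fun x => TP S A x * TP S A x)) x
          * (TP S A x * TP S (d1 A) x) := by
    rw [show (fun x => TP S (fC (fun x => TP S A x * TP S A x)) x
        * (TP S (d1 A) x * TP S A x + TP S A x * TP S (d1 A) x)) = fun x =>
          (TP S (fC (fun x => TP S A x * TP S A x)) x * (TP S (d1 A) x * TP S A x)
          + TP S (fC (fun x => TP S A x * TP S A x)) x * (TP S A x * TP S (d1 A) x))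
      from funext fun x => by ring]
    exact int_add2 _ _ (cp2.fun_mul (cux.fun_mul cu)) (cp2.fun_mul (cu.fun_mul cux))
  have comm4 : (∫ x in (-π)..π, TP S (fC (fun x => TP S A x * TP S A x)) x
        * (TP S (d1 A) x * TP S A x))
      = ∫ x in (-π)..π, TP S (fC (fun x => TP S A x * TP S A x)) x
        * (TP S A x * TP S (d1 A) x) :=
    intervalIntegral.integral_congr fun x _ => by ring
  have comm5 : (∫ x in (-π)..π, (TP S A x * TP S (d1 A) x)
        * TP S (fC (fun x => TP S A x * TP S A x)) x)
      = ∫ x in (-π)..π, TP S (fC (fun x => TP S A x * TP S A x)) x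
        * (TP S A x * TP S (d1 A) x) :=
    intervalIntegral.integral_congr fun x _ => by ring
  -- ibp3 second term split
  have ibp3' : (∫ x in (-π)..π, TP S (d1 (d1 A)) x
        * (TP S (d1 A) x * TP S A x + TP S A x * TP S (d1 A) x))
      = 2 * ∫ x in (-π)..π, (TP S A x * TP S (d1 A) x) * TP S (d1 (d1 A)) x := by
    rw [show (fun x => TP S (d1 (d1 A)) x
        * (TP S (d1 A) x * TP S A x + TP S A x * TP S (d1 A) x)) = fun x =>
          ((TP S A x * TP S (d1 A) x) * TP S (d1 (d1 A)) x
            + (TP S A x * TP S (d1 A) x) * TP S (d1 (d1 A)) x)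
      from funext fun x => by ring]
    rw [int_add2 _ _ ((cu.fun_mul cux).fun_mul cuxx) ((cu.fun_mul cux).fun_mul cuxx)]
    ring
  have comm6 : (∫ x in (-π)..π, TP S A' x * (TP S A x * TP S A x))
      = ∫ x in (-π)..π, TP S A x * (TP S A x * TP S A' x) :=
    intervalIntegral.integral_congr fun x _ => by ring
  -- now pure linear algebra on scalars
  linear_combination (2:ℂ)*ibp1 - 2*comm2 - 2*gal1' + ibp2 - comm1 + comm6 + pr1 - gal2'
    + pr2 + ibp3 - ibp3' + comm5 - 2⁻¹*pr3' - 2⁻¹*comm4 + 2⁻¹*pr3 + 4⁻¹*ibp4 - 4⁻¹*comm3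

/-- identification of the formal derivative of the Hamiltonian sums with integrals. -/
lemma piece6 (S : Finset ℤ) (A A' : ℤ → ℂ) :
    ((∑ k ∈ S, ∑ m ∈ S, (Complex.I*k*A' k * (Complex.I*m*A m)
        + Complex.I*k*A k * (Complex.I*m*A' m)) * (if k+m=0 then (2*π:ℂ) else 0))
      - 3⁻¹ * ∑ j ∈ S, ∑ k ∈ S, ∑ m ∈ S,
          ((A' j * A k + A j * A' k) * A m + A j * A k * A' m)
            * (if j+k+m=0 then (2*π:ℂ) else 0))
    = 2 * (∫ x in (-π)..π, TP S (d1 A) x * TP S (d1 A') x)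
      - (∫ x in (-π)..π, TP S A x * (TP S A x * TP S A' x)) := by
  rw [int_TP_mul_TP, int_TP_cube]
  simp only [d1]
  have hd : (∑ k ∈ S, ∑ m ∈ S, (Complex.I*k*A' k * (Complex.I*m*A m))
        * (if k+m=0 then (2*π:ℂ) else 0))
      = ∑ k ∈ S, ∑ m ∈ S, (Complex.I*k*A k * (Complex.I*m*A' m))
        * (if k+m=0 then (2*π:ℂ) else 0) := by
    rw [sum_swap2]
    refine Finset.sum_congr rfl fun k _ => Finset.sum_congr rfl fun m _ => ?_
    rw [show m + k = k + m from add_comm m k]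
    ring
  have ht1 : (∑ j ∈ S, ∑ k ∈ S, ∑ m ∈ S, A' j * A k * A m
        * (if j+k+m=0 then (2*π:ℂ) else 0))
      = ∑ j ∈ S, ∑ k ∈ S, ∑ m ∈ S, A j * A k * A' m
        * (if j+k+m=0 then (2*π:ℂ) else 0) := by
    rw [sum_swap13]
    refine Finset.sum_congr rfl fun j _ => Finset.sum_congr rfl fun k _ =>
      Finset.sum_congr rfl fun m _ => ?_
    rw [show m + k + j = j + k + m by ring]
    ring
  have ht2 : (∑ j ∈ S, ∑ k ∈ S, ∑ m ∈ S, A j * A' k * A m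
        * (if j+k+m=0 then (2*π:ℂ) else 0))
      = ∑ j ∈ S, ∑ k ∈ S, ∑ m ∈ S, A j * A k * A' m
        * (if j+k+m=0 then (2*π:ℂ) else 0) := by
    rw [sum_swap23]
    refine Finset.sum_congr rfl fun j _ => Finset.sum_congr rfl fun k _ =>
      Finset.sum_congr rfl fun m _ => ?_
    rw [show j + m + k = j + k + m by ring]
    ring
  have hsplit2 : (∑ k ∈ S, ∑ m ∈ S, (Complex.I*k*A' k * (Complex.I*m*A m)
        + Complex.I*k*A k * (Complex.I*m*A' m)) * (if k+m=0 then (2*π:ℂ) else 0))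
      = (∑ k ∈ S, ∑ m ∈ S, (Complex.I*k*A' k * (Complex.I*m*A m))
          * (if k+m=0 then (2*π:ℂ) else 0))
        + ∑ k ∈ S, ∑ m ∈ S, (Complex.I*k*A k * (Complex.I*m*A' m))
          * (if k+m=0 then (2*π:ℂ) else 0) := by
    rw [← Finset.sum_add_distrib]
    refine Finset.sum_congr rfl fun k _ => ?_
    rw [← Finset.sum_add_distrib]
    exact Finset.sum_congr rfl fun m _ => by ring
  have hsplit3 : (∑ j ∈ S, ∑ k ∈ S, ∑ m ∈ S,
        ((A' j * A k + A j * A' k) * A m + A j * A k * A' m)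
          * (if j+k+m=0 then (2*π:ℂ) else 0))
      = (∑ j ∈ S, ∑ k ∈ S, ∑ m ∈ S, A' j * A k * A m * (if j+k+m=0 then (2*π:ℂ) else 0))
        + (∑ j ∈ S, ∑ k ∈ S, ∑ m ∈ S, A j * A' k * A m * (if j+k+m=0 then (2*π:ℂ) else 0))
        + ∑ j ∈ S, ∑ k ∈ S, ∑ m ∈ S, A j * A k * A' m * (if j+k+m=0 then (2*π:ℂ) else 0) := by
    rw [← Finset.sum_add_distrib, ← Finset.sum_add_distrib]
    refine Finset.sum_congr rfl fun j _ => ?_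
    rw [← Finset.sum_add_distrib, ← Finset.sum_add_distrib]
    refine Finset.sum_congr rfl fun k _ => ?_
    rw [← Finset.sum_add_distrib, ← Finset.sum_add_distrib]
    exact Finset.sum_congr rfl fun m _ => by ring
  rw [hsplit2, hsplit3]
  linear_combination hd - 3⁻¹ * ht1 - 3⁻¹ * ht2

/-- the Hamiltonian integral as a sum. -/
lemma piece6b (S : Finset ℤ) (A : ℤ → ℂ) :
    (∫ x in (-π)..π, (TP S (d1 A) x * TP S (d1 A) x
        - 3⁻¹ * (TP S A x * (TP S A x * TP S A x))))
      = (∑ k ∈ S, ∑ m ∈ S, d1 A k * d1 A m * (if k+m=0 then (2*π:ℂ) else 0))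
        - 3⁻¹ * ∑ j ∈ S, ∑ k ∈ S, ∑ m ∈ S,
            A j * A k * A m * (if j+k+m=0 then (2*π:ℂ) else 0) := by
  rw [intervalIntegral.integral_sub
    (((TP_continuous S (d1 A)).fun_mul (TP_continuous S (d1 A))).intervalIntegrable _ _)
    ((continuous_const.fun_mul ((TP_continuous S A).fun_mul
      ((TP_continuous S A).fun_mul (TP_continuous S A)))).intervalIntegrable _ _),
    intervalIntegral.integral_const_mul, int_TP_mul_TP, int_TP_cube]

end Aux

open Aux in
/-- conservation of the discrete Hamiltonian
`∫ ((∂ₓ u^N)² − (1/3)(u^N)³) dx` by the semidiscrete Fourier–Galerkin approximation. -/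
theorem semidiscrete_Hamiltonian_conservation
    (N : ℕ) (hN : 1 ≤ N) (T : ℝ) (hT : 0 ≤ T)
    (uN : ℝ → ℝ → ℝ)
    (hSN : ∀ t ∈ Set.Icc (0:ℝ) T, InSN N (uN t))
    (hdiff : ∀ x : ℝ, ∀ t ∈ Set.Icc (0:ℝ) T, DifferentiableAt ℝ (fun s => uN s x) t)
    (hGal : ∀ t ∈ Set.Icc (0:ℝ) T, ∀ χ : ℝ → ℝ, InSN N χ →
      L2inner (fun x => deriv (fun s => uN s x) t + uN t x * dx (uN t) x + dx3 (uN t) x) χ = 0) :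
    ∀ t ∈ Set.Icc (0:ℝ) T,
      (∫ x in (-Real.pi)..Real.pi, ((dx (uN t) x)^2 - (1/3) * (uN t x)^3)) =
      (∫ x in (-Real.pi)..Real.pi, ((dx (uN 0) x)^2 - (1/3) * (uN 0 x)^3)) := by
  intro t ht
  rcases eq_or_lt_of_le hT with hT0 | hT0
  · have ht0 : t = 0 := by
      apply le_antisymm _ ht.1
      rw [hT0]; exact ht.2
    rw [ht0]
  classical
  have hUD : UniqueDiffOn ℝ (Set.Icc (0:ℝ) T) := uniqueDiffOn_Icc hT0
  set a : ℝ → ℤ → ℂ := fun s => sampC N (uN s) with ha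
  set a' : ℝ → ℤ → ℂ := fun s k => deriv (fun r => a r k) s with ha'
  have hrep : ∀ s ∈ Set.Icc (0:ℝ) T, ∀ x : ℝ, ((uN s x : ℝ):ℂ) = TP (KS N) (a s) x :=
    fun s hs x => rep_of_InSN (hSN s hs) x
  have hadiff : ∀ (k : ℤ), ∀ s ∈ Set.Icc (0:ℝ) T, DifferentiableAt ℝ (fun r => a r k) s := by
    intro k s hs
    simp only [ha, sampC]
    apply DifferentiableAt.const_mul
    apply DifferentiableAt.fun_sum
    intro j _
    exact ((hasDerivAt_ofReal (hdiff (xjf N j) s hs).hasDerivAt).differentiableAt).const_mul _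
  have haderiv : ∀ (k : ℤ), ∀ s ∈ Set.Icc (0:ℝ) T, HasDerivAt (fun r => a r k) (a' s k) s :=
    fun k s hs => by simp only [ha']; exact (hadiff k s hs).hasDerivAt
  -- spatial derivatives
  have hux : ∀ s ∈ Set.Icc (0:ℝ) T, ∀ x : ℝ,
      ((dx (uN s) x : ℝ):ℂ) = TP (KS N) (d1 (a s)) x :=
    fun s hs => re_deriv_step (KS N) (a s) (uN s) (hrep s hs)
  have hux2 : ∀ s ∈ Set.Icc (0:ℝ) T, ∀ x : ℝ,
      ((deriv (deriv (uN s)) x : ℝ):ℂ) = TP (KS N) (d1 (d1 (a s))) x :=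
    fun s hs => re_deriv_step (KS N) (d1 (a s)) (deriv (uN s)) (hux s hs)
  have hux3 : ∀ s ∈ Set.Icc (0:ℝ) T, ∀ x : ℝ,
      ((dx3 (uN s) x : ℝ):ℂ) = TP (KS N) (d1 (d1 (d1 (a s)))) x :=
    fun s hs => re_deriv_step (KS N) (d1 (d1 (a s))) (deriv (deriv (uN s))) (hux2 s hs)
  -- time derivative
  have hut : ∀ s ∈ Set.Icc (0:ℝ) T, ∀ x : ℝ,
      ((deriv (fun r => uN r x) s : ℝ):ℂ) = TP (KS N) (a' s) x := by
    intro s hs x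
    have hd1' : HasDerivAt (fun r => ((uN r x : ℝ):ℂ)) ((deriv (fun r => uN r x) s : ℝ):ℂ) s :=
      hasDerivAt_ofReal (hdiff x s hs).hasDerivAt
    have hd2 : HasDerivAt (fun r => TP (KS N) (a r) x) (TP (KS N) (a' s) x) s := by
      unfold TP
      exact HasDerivAt.fun_sum fun k _ => (haderiv k s hs).mul_const (E k x)
    have heq := deriv_eq_of_eqOn (hUD s hs) hs (fun y hy => hrep y hy x)
      hd1'.differentiableAt hd2.differentiableAt
    rw [← hd1'.deriv, heq, hd2.deriv]
  -- the complexified Galerkin residual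
  have hGcont : ∀ (s : ℝ), Continuous (fun x => TP (KS N) (a' s) x
      + TP (KS N) (a s) x * TP (KS N) (d1 (a s)) x + TP (KS N) (d1 (d1 (d1 (a s)))) x) :=
    fun s => ((TP_continuous _ _).add
      ((TP_continuous _ _).mul (TP_continuous _ _))).add (TP_continuous _ _)
  have hGcast : ∀ s ∈ Set.Icc (0:ℝ) T, ∀ x : ℝ,
      ((deriv (fun r => uN r x) s + uN s x * dx (uN s) x + dx3 (uN s) x : ℝ):ℂ)
        = TP (KS N) (a' s) x + TP (KS N) (a s) x * TP (KS N) (d1 (a s)) x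
          + TP (KS N) (d1 (d1 (d1 (a s)))) x := by
    intro s hs x
    push_cast
    rw [hut s hs x, hrep s hs x, hux s hs x, hux3 s hs x]
  have hGrealcont : ∀ s ∈ Set.Icc (0:ℝ) T, Continuous (fun x =>
      deriv (fun r => uN r x) s + uN s x * dx (uN s) x + dx3 (uN s) x) := by
    intro s hs
    have heq2 : (fun x => deriv (fun r => uN r x) s + uN s x * dx (uN s) x + dx3 (uN s) x)
        = fun x => (TP (KS N) (a' s) x + TP (KS N) (a s) x * TP (KS N) (d1 (a s)) x
          + TP (KS N) (d1 (d1 (d1 (a s)))) x).re := by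
      funext x
      rw [← hGcast s hs x, Complex.ofReal_re]
    rw [heq2]
    exact Complex.continuous_re.comp (hGcont s)
  have hgalE : ∀ s ∈ Set.Icc (0:ℝ) T, ∀ k ∈ KS N,
      (∫ x in (-Real.pi)..Real.pi,
        (TP (KS N) (a' s) x + TP (KS N) (a s) x * TP (KS N) (d1 (a s)) x
          + TP (KS N) (d1 (d1 (d1 (a s)))) x) * E (-k) x) = 0 := by
    intro s hs k hk
    have hcosI : InSN N (fun x => Real.cos ((k:ℝ)*x)) := ⟨ccos k, fun x => (TP_ccos hk x).symm⟩
    have hsinI : InSN N (fun x => Real.sin ((k:ℝ)*x)) := ⟨csin k, fun x => (TP_csin hk x).symm⟩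
    have hc := hGal s hs _ hcosI
    have hsn := hGal s hs _ hsinI
    simp only [L2inner] at hc hsn
    have hccos : Continuous (fun x : ℝ => Real.cos ((k:ℝ)*x)) :=
      Real.continuous_cos.comp (continuous_const.mul continuous_id)
    have hcsin : Continuous (fun x : ℝ => Real.sin ((k:ℝ)*x)) :=
      Real.continuous_sin.comp (continuous_const.mul continuous_id)
    have hpt : ∀ x ∈ Set.uIcc (-Real.pi) Real.pi,
        (TP (KS N) (a' s) x + TP (KS N) (a s) x * TP (KS N) (d1 (a s)) x
          + TP (KS N) (d1 (d1 (d1 (a s)))) x) * E (-k) x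
        = (((deriv (fun r => uN r x) s + uN s x * dx (uN s) x + dx3 (uN s) x)
              * Real.cos ((k:ℝ)*x) : ℝ):ℂ)
          - Complex.I * (((deriv (fun r => uN r x) s + uN s x * dx (uN s) x + dx3 (uN s) x)
              * Real.sin ((k:ℝ)*x) : ℝ):ℂ) := by
      intro x _
      rw [← hGcast s hs x, E_neg_formula]
      push_cast
      ring
    have hcont1 : Continuous (fun x : ℝ => (((deriv (fun r => uN r x) s
        + uN s x * dx (uN s) x + dx3 (uN s) x) * Real.cos ((k:ℝ)*x) : ℝ):ℂ)) :=
      Complex.continuous_ofReal.comp ((hGrealcont s hs).mul hccos)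
    have hcont2 : Continuous (fun x : ℝ => Complex.I * (((deriv (fun r => uN r x) s
        + uN s x * dx (uN s) x + dx3 (uN s) x) * Real.sin ((k:ℝ)*x) : ℝ):ℂ)) :=
      continuous_const.mul (Complex.continuous_ofReal.comp ((hGrealcont s hs).mul hcsin))
    rw [intervalIntegral.integral_congr hpt]
    rw [intervalIntegral.integral_sub (hcont1.intervalIntegrable _ _)
      (hcont2.intervalIntegrable _ _)]
    rw [intervalIntegral.integral_const_mul]
    rw [intervalIntegral.integral_ofReal, intervalIntegral.integral_ofReal]
    rw [hc, hsn]
    simp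
  have hgalTP : ∀ s ∈ Set.Icc (0:ℝ) T, ∀ W : ℤ → ℂ,
      (∫ x in (-Real.pi)..Real.pi,
        (TP (KS N) (a' s) x + TP (KS N) (a s) x * TP (KS N) (d1 (a s)) x
          + TP (KS N) (d1 (d1 (d1 (a s)))) x) * TP (KS N) W x) = 0 := by
    intro s hs W
    have hpt : ∀ x ∈ Set.uIcc (-Real.pi) Real.pi,
        (TP (KS N) (a' s) x + TP (KS N) (a s) x * TP (KS N) (d1 (a s)) x
          + TP (KS N) (d1 (d1 (d1 (a s)))) x) * TP (KS N) W x
        = ∑ m ∈ KS N, W m * ((TP (KS N) (a' s) x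
            + TP (KS N) (a s) x * TP (KS N) (d1 (a s)) x
            + TP (KS N) (d1 (d1 (d1 (a s)))) x) * E m x) := by
      intro x _
      rw [show TP (KS N) W x = ∑ m ∈ KS N, W m * E m x from rfl, Finset.mul_sum]
      exact Finset.sum_congr rfl fun m _ => by ring
    rw [intervalIntegral.integral_congr hpt,
      intervalIntegral.integral_finset_sum (fun m _ =>
        (continuous_const.fun_mul ((hGcont s).fun_mul (E_continuous m))).intervalIntegrable _ _)]
    refine Finset.sum_eq_zero fun m hm => ?_
    rw [intervalIntegral.integral_const_mul]
    have h0 := hgalE s hs (-m) (KS_symm N m hm)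
    rw [neg_neg] at h0
    rw [h0, mul_zero]
  -- the conserved quantity as a function of the coefficients
  have hmain : ∀ s ∈ Set.Icc (0:ℝ) T,
      2 * (∫ x in (-Real.pi)..Real.pi, TP (KS N) (d1 (a s)) x * TP (KS N) (d1 (a' s)) x)
        - (∫ x in (-Real.pi)..Real.pi,
            TP (KS N) (a s) x * (TP (KS N) (a s) x * TP (KS N) (a' s) x)) = 0 :=
    fun s hs => piece5 (KS N) (KS_symm N) (a s) (a' s) (hgalTP s hs)
  have hHrepr : ∀ s ∈ Set.Icc (0:ℝ) T,
      (∫ x in (-Real.pi)..Real.pi, ((dx (uN s) x)^2 - (1/3) * (uN s x)^3))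
        = ((∑ k ∈ KS N, ∑ m ∈ KS N, d1 (a s) k * d1 (a s) m
              * (if k+m=0 then (2*Real.pi:ℂ) else 0))
          - 3⁻¹ * ∑ j ∈ KS N, ∑ k ∈ KS N, ∑ m ∈ KS N,
              a s j * a s k * a s m * (if j+k+m=0 then (2*Real.pi:ℂ) else 0)).re := by
    intro s hs
    rw [← piece6b (KS N) (a s)]
    have hcast : ∀ x ∈ Set.uIcc (-Real.pi) Real.pi,
        ((((dx (uN s) x)^2 - (1/3) * (uN s x)^3 : ℝ)):ℂ)
          = TP (KS N) (d1 (a s)) x * TP (KS N) (d1 (a s)) x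
            - 3⁻¹ * (TP (KS N) (a s) x * (TP (KS N) (a s) x * TP (KS N) (a s) x)) := by
      intro x _
      push_cast
      rw [hux s hs x, hrep s hs x]
      ring
    rw [← intervalIntegral.integral_congr hcast, intervalIntegral.integral_ofReal,
      Complex.ofReal_re]
  -- time differentiability of the coefficient sums
  have hΦderiv : ∀ s ∈ Set.Icc (0:ℝ) T,
      HasDerivAt (fun r => (∑ k ∈ KS N, ∑ m ∈ KS N, d1 (a r) k * d1 (a r) m
            * (if k+m=0 then (2*Real.pi:ℂ) else 0))
          - 3⁻¹ * ∑ j ∈ KS N, ∑ k ∈ KS N, ∑ m ∈ KS N,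
              a r j * a r k * a r m * (if j+k+m=0 then (2*Real.pi:ℂ) else 0))
        ((∑ k ∈ KS N, ∑ m ∈ KS N, (Complex.I*k*a' s k * (Complex.I*m*a s m)
            + Complex.I*k*a s k * (Complex.I*m*a' s m)) * (if k+m=0 then (2*Real.pi:ℂ) else 0))
          - 3⁻¹ * ∑ j ∈ KS N, ∑ k ∈ KS N, ∑ m ∈ KS N,
              ((a' s j * a s k + a s j * a' s k) * a s m + a s j * a s k * a' s m)
                * (if j+k+m=0 then (2*Real.pi:ℂ) else 0)) s := by
    intro s hs
    simp only [d1]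
    apply HasDerivAt.sub
    · exact HasDerivAt.fun_sum fun k _ => HasDerivAt.fun_sum fun m _ =>
        ((((haderiv k s hs).const_mul (Complex.I * (k:ℂ))).mul
          ((haderiv m s hs).const_mul (Complex.I * (m:ℂ)))).mul_const _)
    · exact (HasDerivAt.fun_sum fun j _ => HasDerivAt.fun_sum fun k _ => HasDerivAt.fun_sum fun m _ =>
        ((((haderiv j s hs).mul (haderiv k s hs)).mul (haderiv m s hs)).mul_const _)).const_mul _
  -- conclusion via the mean value theorem
  have hder0 : ∀ s ∈ Set.Ico (0:ℝ) T,
      derivWithin (fun r => ((∑ k ∈ KS N, ∑ m ∈ KS N, d1 (a r) k * d1 (a r) m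
            * (if k+m=0 then (2*Real.pi:ℂ) else 0))
          - 3⁻¹ * ∑ j ∈ KS N, ∑ k ∈ KS N, ∑ m ∈ KS N,
              a r j * a r k * a r m * (if j+k+m=0 then (2*Real.pi:ℂ) else 0)).re)
        (Set.Icc (0:ℝ) T) s = 0 := by
    intro s hs
    have hs' : s ∈ Set.Icc (0:ℝ) T := ⟨hs.1, le_of_lt hs.2⟩
    have hd := hasDerivAt_re (hΦderiv s hs')
    rw [hd.differentiableAt.derivWithin (hUD s hs'), hd.deriv]
    have h6 := piece6 (KS N) (a s) (a' s)
    rw [h6, hmain s hs', Complex.zero_re]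
  have hdiffOn : DifferentiableOn ℝ (fun r => ((∑ k ∈ KS N, ∑ m ∈ KS N, d1 (a r) k * d1 (a r) m
            * (if k+m=0 then (2*Real.pi:ℂ) else 0))
          - 3⁻¹ * ∑ j ∈ KS N, ∑ k ∈ KS N, ∑ m ∈ KS N,
              a r j * a r k * a r m * (if j+k+m=0 then (2*Real.pi:ℂ) else 0)).re)
      (Set.Icc (0:ℝ) T) :=
    fun s hs => ((hasDerivAt_re (hΦderiv s hs)).differentiableAt).differentiableWithinAt
  have hconst := constant_of_derivWithin_zero hdiffOn hder0 t ht
  rw [hHrepr t ht, hHrepr 0 ⟨le_refl 0, hT⟩]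
  exact hconst


end KdVSpec
end
end

section
/- Let N ≥ 1 be an integer, k > 0, and b₁,…,b_s nonzero real numbers. Suppose real-valued U^n, Y^{n,i} ∈ S_N satisfy one step of the s-stage composition scheme: Y^{n,0} = U^n, Y^{n,i} = Y^{n,i−1} + k b_i F((Y^{n,i} + Y^{n,i−1})/2) for 1 ≤ i ≤ s, and U^{n+1} = Y^{n,s}. Then the scheme is L²-conservative: ‖Y^{n,i}‖ = ‖U^n‖ for all 1 ≤ i ≤ s, and in particular ‖U^{n+1}‖ = ‖U^n‖. -/
noncomputable section

namespace KdVSpec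

open Complex Finset intervalIntegral

def trig (N : ℕ) (c : ℤ → ℂ) : ℝ → ℂ := fun x =>
  ∑ k ∈ Finset.Icc (-(N : ℤ)) (N : ℤ), c k * Complex.exp (Complex.I * (k : ℂ) * (x : ℂ))

def Rep (N : ℕ) (v : ℝ → ℝ) (c : ℤ → ℂ) : Prop := ∀ x : ℝ, (v x : ℂ) = trig N c x

lemma trig_continuous (N : ℕ) (c : ℤ → ℂ) : Continuous (trig N c) := by
  refine continuous_finset_sum _ fun k _ => ?_
  exact continuous_const.mul (Complex.continuous_exp.comp (by fun_prop))

lemma trig_hasDerivAt (N : ℕ) (c : ℤ → ℂ) (x : ℝ) :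
    HasDerivAt (trig N c) (trig N (fun k => Complex.I * k * c k) x) x := by
  unfold trig
  refine HasDerivAt.fun_sum fun k _ => ?_
  have h1 : HasDerivAt (fun x : ℝ => (Complex.I * k) * (x : ℂ)) (Complex.I * k) x := by
    simpa using (Complex.ofRealCLM.hasDerivAt (x := x)).const_mul (Complex.I * (k : ℂ))
  have h2 := (h1.cexp).const_mul (c k)
  refine h2.congr_deriv ?_
  ring

lemma Rep.eq_re {N v c} (h : Rep N v c) (x : ℝ) : v x = (trig N c x).re := by
  rw [← h x]; simp

lemma Rep.im_eq {N v c} (h : Rep N v c) (x : ℝ) : (trig N c x).im = 0 := by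
  rw [← h x]; simp

lemma Rep.continuous {N v c} (h : Rep N v c) : Continuous v := by
  have : v = fun x => (trig N c x).re := funext fun x => h.eq_re x
  rw [this]; exact Complex.continuous_re.comp (trig_continuous N c)

lemma Rep.hasDerivAt {N v c} (h : Rep N v c) (x : ℝ) :
    HasDerivAt v ((trig N (fun k => Complex.I * k * c k) x).re) x := by
  have hv : v = fun x => (trig N c x).re := funext fun x => h.eq_re x
  rw [hv]
  exact (Complex.reCLM.hasFDerivAt.comp_hasDerivAt x (trig_hasDerivAt N c x))

lemma Rep.deriv {N v c} (h : Rep N v c) :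
    Rep N (_root_.deriv v) (fun k => Complex.I * k * c k) := by
  intro x
  have hd : _root_.deriv v x = (trig N (fun k => Complex.I * k * c k) x).re :=
    (h.hasDerivAt x).deriv
  have him : (trig N (fun k => Complex.I * k * c k) x).im = 0 := by
    have h1 : HasDerivAt (fun y => (trig N c y).im)
        ((trig N (fun k => Complex.I * k * c k) x).im) x :=
      (Complex.imCLM.hasFDerivAt.comp_hasDerivAt x (trig_hasDerivAt N c x))
    have h2 : (fun y => (trig N c y).im) = fun _ => (0 : ℝ) := funext fun y => h.im_eq y
    rw [h2] at h1
    exact (h1.unique (hasDerivAt_const x 0))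
  rw [hd]
  exact Complex.ext (by simp) (by simp [him])

lemma Rep.deriv_eq {N v c} (h : Rep N v c) :
    _root_.deriv v = fun x => (trig N (fun k => Complex.I * k * c k) x).re :=
  funext fun x => (h.hasDerivAt x).deriv

lemma exp_pi_eq (n : ℤ) :
    Complex.exp (Complex.I * n * (Real.pi : ℂ)) =
      Complex.exp (Complex.I * n * (-Real.pi : ℝ)) := by
  have h : Complex.I * n * ((-Real.pi : ℝ) : ℂ) + (n : ℂ) * (2 * Real.pi * Complex.I)
      = Complex.I * n * (Real.pi : ℂ) := by push_cast; ring
  rw [← h, Complex.exp_add, Complex.exp_int_mul_two_pi_mul_I, mul_one]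

lemma integral_exp_int (n : ℤ) :
    (∫ x in (-Real.pi)..Real.pi, Complex.exp (Complex.I * n * (x : ℂ)))
      = if n = 0 then (2 * Real.pi : ℂ) else 0 := by
  rcases eq_or_ne n 0 with hn | hn
  · simp only [hn, if_pos]
    push_cast
    simp only [Int.cast_zero, mul_zero, zero_mul, Complex.exp_zero]
    simp [Complex.ofReal_neg, sub_neg_eq_add]
    ring
  · have hc : (Complex.I * n : ℂ) ≠ 0 := by
      simp [Complex.I_ne_zero, Complex.ext_iff]
      exact_mod_cast hn
    rw [if_neg hn, integral_exp_mul_complex hc, div_eq_zero_iff]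
    left
    rw [sub_eq_zero]
    exact exp_pi_eq n


lemma integral_trig_mul (N : ℕ) (c d : ℤ → ℂ) :
    (∫ x in (-Real.pi)..Real.pi, trig N c x * trig N d x) =
      ∑ j ∈ Finset.Icc (-(N : ℤ)) (N : ℤ), ∑ k ∈ Finset.Icc (-(N : ℤ)) (N : ℤ),
        c j * d k * (if j + k = 0 then (2 * Real.pi : ℂ) else 0) := by
  have hpt : ∀ x : ℝ, trig N c x * trig N d x =
      ∑ j ∈ Finset.Icc (-(N : ℤ)) (N : ℤ), ∑ k ∈ Finset.Icc (-(N : ℤ)) (N : ℤ),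
        c j * d k * Complex.exp (Complex.I * ((j + k : ℤ) : ℂ) * (x : ℂ)) := by
    intro x
    unfold trig
    rw [Finset.sum_mul_sum]
    refine Finset.sum_congr rfl fun j _ => Finset.sum_congr rfl fun k _ => ?_
    rw [show c j * Complex.exp (Complex.I * (j:ℂ) * x) * (d k * Complex.exp (Complex.I * (k:ℂ) * x))
        = c j * d k * (Complex.exp (Complex.I * (j:ℂ) * x) * Complex.exp (Complex.I * (k:ℂ) * x)) by ring,
      ← Complex.exp_add]
    push_cast
    ring_nf
  simp only [hpt]
  rw [intervalIntegral.integral_finset_sum]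
  · refine Finset.sum_congr rfl fun j _ => ?_
    rw [intervalIntegral.integral_finset_sum]
    · refine Finset.sum_congr rfl fun k _ => ?_
      rw [intervalIntegral.integral_const_mul, integral_exp_int]
    · intro k _
      exact (Continuous.intervalIntegrable (by fun_prop) _ _)
  · intro j _
    refine Continuous.intervalIntegrable ?_ _ _
    exact continuous_finset_sum _ fun k _ => by fun_prop

lemma interval_integral_re {a b : ℝ} (f : ℝ → ℂ) (hf : IntervalIntegrable f MeasureTheory.volume a b) :
    (∫ x in a..b, (f x).re) = (∫ x in a..b, f x).re :=
  (Complex.reCLM.intervalIntegral_comp_comm hf)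

def dsum (N : ℕ) (c d : ℤ → ℂ) : ℂ :=
  ∑ j ∈ Finset.Icc (-(N : ℤ)) (N : ℤ), ∑ k ∈ Finset.Icc (-(N : ℤ)) (N : ℤ),
    c j * d k * (if j + k = 0 then (2 * Real.pi : ℂ) else 0)

lemma L2inner_rep {N : ℕ} {u v : ℝ → ℝ} {c d : ℤ → ℂ}
    (hu : Rep N u c) (hv : Rep N v d) :
    L2inner u v = (dsum N c d).re := by
  unfold L2inner dsum
  rw [← integral_trig_mul N c d]
  rw [← interval_integral_re _ (Continuous.intervalIntegrable (by
    exact (trig_continuous N c).mul (trig_continuous N d)) _ _)]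
  refine intervalIntegral.integral_congr fun x _ => ?_
  rw [Complex.mul_re, hu.im_eq x, hv.im_eq x, ← hu.eq_re x, ← hv.eq_re x]
  ring

lemma sum_antisym (N : ℕ) (f : ℤ → ℂ) (hf : ∀ j, f (-j) = - f j) :
    ∑ j ∈ Finset.Icc (-(N : ℤ)) (N : ℤ), f j = 0 := by
  have h : ∑ j ∈ Finset.Icc (-(N : ℤ)) (N : ℤ), f j
      = ∑ j ∈ Finset.Icc (-(N : ℤ)) (N : ℤ), f (-j) := by
    refine Finset.sum_equiv (Equiv.neg ℤ) (fun j => ?_) (fun j _ => by simp)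
    simp only [Equiv.neg_apply, Finset.mem_Icc]
    omega
  have h2 : ∑ j ∈ Finset.Icc (-(N : ℤ)) (N : ℤ), f j
      = - ∑ j ∈ Finset.Icc (-(N : ℤ)) (N : ℤ), f j := by
    nth_rewrite 1 [h]
    rw [← Finset.sum_neg_distrib]
    exact Finset.sum_congr rfl fun j _ => hf j
  linear_combination h2 / 2

lemma integral_exp_mul_fun (w : ℝ → ℝ) (k : ℤ) :
    (∫ x in (-Real.pi)..Real.pi, Complex.exp (Complex.I * (k : ℂ) * (x : ℂ)) * (w x : ℂ))
      = 2 * Real.pi * fCoeff w (-k) := by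
  unfold fCoeff
  rw [show ((((-k : ℤ) : ℂ))) = -(k : ℂ) by push_cast; ring]
  rw [show (fun x : ℝ => Complex.exp (-(Complex.I * (-(k:ℂ)) * (x:ℂ))) * (w x : ℂ))
      = fun x : ℝ => Complex.exp (Complex.I * (k:ℂ) * (x:ℂ)) * (w x : ℂ) by
    funext x; ring_nf]
  rw [← mul_assoc]
  have hpi : (2 * Real.pi : ℂ) ≠ 0 := by
    simp [Complex.ext_iff, Real.pi_ne_zero]
  field_simp

lemma L2inner_PN {N : ℕ} (w : ℝ → ℝ) {v : ℝ → ℝ} {c : ℤ → ℂ}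
    (hw : Continuous w) (hv : Rep N v c) :
    L2inner (PN N w) v = L2inner w v := by
  have hPN : ∀ x, PN N w x = (trig N (fCoeff w) x).re := fun x => rfl
  have lhs : L2inner (PN N w) v
      = (∫ x in (-Real.pi)..Real.pi, trig N (fCoeff w) x * trig N c x).re := by
    unfold L2inner
    rw [← interval_integral_re (fun x => trig N (fCoeff w) x * trig N c x) (Continuous.intervalIntegrable
      ((trig_continuous N (fCoeff w)).mul (trig_continuous N c)) _ _)]
    refine intervalIntegral.integral_congr fun x _ => ?_
    rw [hPN x, Complex.mul_re, hv.im_eq x, ← hv.eq_re x]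
    ring
  have rhs : L2inner w v
      = (∫ x in (-Real.pi)..Real.pi,
          (∑ k ∈ Finset.Icc (-(N:ℤ)) (N:ℤ),
            c k * (Complex.exp (Complex.I * (k:ℂ) * (x:ℂ)) * (w x : ℂ)))).re := by
    unfold L2inner
    rw [← interval_integral_re _ (Continuous.intervalIntegrable
      (continuous_finset_sum _ fun k _ => by fun_prop) _ _)]
    refine intervalIntegral.integral_congr fun x _ => ?_
    have : (∑ k ∈ Finset.Icc (-(N:ℤ)) (N:ℤ),
        c k * (Complex.exp (Complex.I * (k:ℂ) * (x:ℂ)) * (w x : ℂ)))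
        = trig N c x * (w x : ℂ) := by
      unfold trig
      rw [Finset.sum_mul]
      exact Finset.sum_congr rfl fun k _ => by ring
    rw [this, Complex.mul_re, hv.im_eq x, ← hv.eq_re x]
    simp
    ring
  rw [lhs, rhs, integral_trig_mul]
  rw [intervalIntegral.integral_finset_sum (fun k _ =>
    Continuous.intervalIntegrable (by fun_prop) _ _)]
  congr 1
  have hcol : ∀ j ∈ Finset.Icc (-(N:ℤ)) (N:ℤ),
      (∑ k ∈ Finset.Icc (-(N:ℤ)) (N:ℤ),
        fCoeff w j * c k * (if j + k = 0 then (2 * Real.pi : ℂ) else 0))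
      = fCoeff w j * c (-j) * (2 * Real.pi : ℂ) := by
    intro j hj
    have h1 : (∑ k ∈ Finset.Icc (-(N:ℤ)) (N:ℤ),
        fCoeff w j * c k * (if j + k = 0 then (2 * Real.pi : ℂ) else 0))
        = ∑ k ∈ Finset.Icc (-(N:ℤ)) (N:ℤ),
          (if k = -j then fCoeff w j * c (-j) * (2 * Real.pi : ℂ) else 0) := by
      refine Finset.sum_congr rfl fun k _ => ?_
      by_cases h : k = -j
      · subst h; simp
      · rw [if_neg h, if_neg (by omega), mul_zero]
    rw [h1, Finset.sum_ite_eq']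
    rw [if_pos (by simp only [Finset.mem_Icc] at hj ⊢; omega)]
  rw [Finset.sum_congr rfl hcol]
  have hR : ∀ k ∈ Finset.Icc (-(N:ℤ)) (N:ℤ),
      (∫ x in (-Real.pi)..Real.pi,
        c k * (Complex.exp (Complex.I * (k:ℂ) * (x:ℂ)) * (w x : ℂ)))
      = c k * (2 * Real.pi * fCoeff w (-k)) := by
    intro k _
    rw [intervalIntegral.integral_const_mul, integral_exp_mul_fun]
  rw [Finset.sum_congr rfl hR]
  refine Finset.sum_equiv (Equiv.neg ℤ) (fun j => by simp only [Equiv.neg_apply, Finset.mem_Icc]; omega)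
    (fun j _ => ?_)
  simp only [Equiv.neg_apply, neg_neg]
  ring

lemma trig_periodic (N : ℕ) (c : ℤ → ℂ) :
    trig N c Real.pi = trig N c (-Real.pi) := by
  unfold trig
  refine Finset.sum_congr rfl fun k _ => ?_
  rw [show ((-Real.pi : ℝ) : ℂ) = (((-Real.pi : ℝ)) : ℂ) from rfl]
  push_cast
  rw [exp_pi_eq k]
  push_cast
  ring_nf

lemma integral_sq_mul_deriv {N : ℕ} {m : ℝ → ℝ} {c : ℤ → ℂ} (hm : Rep N m c) :
    (∫ x in (-Real.pi)..Real.pi, m x * deriv m x * m x) = 0 := by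
  set c' : ℤ → ℂ := fun k => Complex.I * k * c k with hc'
  have hd : ∀ x, HasDerivAt m ((trig N c' x).re) x := hm.hasDerivAt
  have hde : deriv m = fun x => (trig N c' x).re := hm.deriv_eq
  have hcont : Continuous m := hm.continuous
  have hcont' : Continuous (deriv m) := by
    rw [hde]; exact Complex.continuous_re.comp (trig_continuous N c')
  have key : ∀ x ∈ Set.uIcc (-Real.pi) Real.pi,
      HasDerivAt (fun y => m y ^ 3 / 3) (m x * deriv m x * m x) x := by
    intro x _
    have h := ((hd x).fun_pow 3).div_const 3
    have : deriv m x = (trig N c' x).re := by rw [hde]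
    refine h.congr_deriv ?_
    rw [this]
    ring
  rw [intervalIntegral.integral_eq_sub_of_hasDerivAt key
    (Continuous.intervalIntegrable (by fun_prop) _ _)]
  have hper : m Real.pi = m (-Real.pi) := by
    rw [hm.eq_re, hm.eq_re, trig_periodic]
  rw [hper, sub_self]

lemma L2inner_dx3 {N : ℕ} {m : ℝ → ℝ} {c : ℤ → ℂ} (hm : Rep N m c) :
    L2inner (dx3 m) m = 0 := by
  have h3 : Rep N (dx3 m) (fun k => Complex.I * k * (Complex.I * k * (Complex.I * k * c k))) :=
    hm.deriv.deriv.deriv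
  rw [L2inner_rep h3 hm]
  unfold dsum
  have hcol : ∀ j ∈ Finset.Icc (-(N:ℤ)) (N:ℤ),
      (∑ k ∈ Finset.Icc (-(N:ℤ)) (N:ℤ),
        (Complex.I * j * (Complex.I * j * (Complex.I * j * c j))) * c k *
          (if j + k = 0 then (2 * Real.pi : ℂ) else 0))
      = (Complex.I * j * (Complex.I * j * (Complex.I * j * c j))) * c (-j) * (2 * Real.pi : ℂ) := by
    intro j hj
    have h1 : ∀ k ∈ Finset.Icc (-(N:ℤ)) (N:ℤ),
        (Complex.I * j * (Complex.I * j * (Complex.I * j * c j))) * c k *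
          (if j + k = 0 then (2 * Real.pi : ℂ) else 0)
        = (if k = -j then (Complex.I * j * (Complex.I * j * (Complex.I * j * c j))) * c (-j) *
            (2 * Real.pi : ℂ) else 0) := by
      intro k _
      by_cases h : k = -j
      · subst h; simp
      · rw [if_neg h, if_neg (by omega), mul_zero]
    rw [Finset.sum_congr rfl h1, Finset.sum_ite_eq']
    rw [if_pos (by simp only [Finset.mem_Icc] at hj ⊢; omega)]
  rw [Finset.sum_congr rfl hcol, sum_antisym]
  · simp
  · intro j
    push_cast
    ring

lemma PN_continuous (N : ℕ) (w : ℝ → ℝ) : Continuous (PN N w) := by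
  have : PN N w = fun x => (trig N (fCoeff w) x).re := rfl
  rw [this]
  exact Complex.continuous_re.comp (trig_continuous N (fCoeff w))

lemma dx3_eq {N : ℕ} {m : ℝ → ℝ} {c : ℤ → ℂ} (hm : Rep N m c) :
    Continuous (dx3 m) := hm.deriv.deriv.deriv.continuous

lemma L2inner_F_self {N : ℕ} {m : ℝ → ℝ} {c : ℤ → ℂ} (hm : Rep N m c) :
    L2inner (Fmap N m) m = 0 := by
  have hcont : Continuous m := hm.continuous
  have hcont' : Continuous (fun y => m y * dx m y) := by
    have := hm.deriv.continuous
    unfold dx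
    fun_prop
  have hsplit : L2inner (Fmap N m) m
      = -(L2inner (dx3 m) m) - L2inner (PN N (fun y => m y * dx m y)) m := by
    unfold L2inner Fmap
    rw [← intervalIntegral.integral_neg, ← intervalIntegral.integral_sub]
    · refine intervalIntegral.integral_congr fun x _ => ?_
      ring
    · exact ((Continuous.intervalIntegrable (((dx3_eq hm).mul hcont)) _ _).neg)
    · exact Continuous.intervalIntegrable ((PN_continuous _ _).mul hcont) _ _
  rw [hsplit, L2inner_dx3 hm, L2inner_PN _ hcont' hm]
  have : L2inner (fun y => m y * dx m y) m = 0 := by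
    unfold L2inner dx
    exact integral_sq_mul_deriv hm
  rw [this]
  ring

lemma Fmap_continuous {N : ℕ} {m : ℝ → ℝ} {c : ℤ → ℂ} (hm : Rep N m c) :
    Continuous (Fmap N m) := by
  unfold Fmap
  exact ((dx3_eq hm).neg).sub (PN_continuous _ _)

lemma rep_avg {N : ℕ} {u w : ℝ → ℝ} {cu cw : ℤ → ℂ}
    (hu : Rep N u cu) (hw : Rep N w cw) :
    Rep N (fun y => (u y + w y) / 2) (fun k => (cu k + cw k) / 2) := by
  intro x
  push_cast
  rw [hu x, hw x]
  unfold trig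
  rw [← Finset.sum_add_distrib]
  rw [Finset.sum_div]
  refine Finset.sum_congr rfl fun k _ => ?_
  ring

lemma step_sq {N : ℕ} {k b : ℝ} {u w : ℝ → ℝ} {cu cw : ℤ → ℂ}
    (hu : Rep N u cu) (hw : Rep N w cw)
    (hrec : ∀ x : ℝ, u x = w x + k * b * Fmap N (fun y => (u y + w y) / 2) x) :
    (∫ x in (-Real.pi)..Real.pi, (u x)^2) = ∫ x in (-Real.pi)..Real.pi, (w x)^2 := by
  set m : ℝ → ℝ := fun y => (u y + w y) / 2 with hm_def
  have hm : Rep N m (fun k => (cu k + cw k) / 2) := rep_avg hu hw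
  have hF : Continuous (Fmap N m) := Fmap_continuous hm
  have hdiff : (∫ x in (-Real.pi)..Real.pi, (u x)^2) - (∫ x in (-Real.pi)..Real.pi, (w x)^2)
      = ∫ x in (-Real.pi)..Real.pi, (2 * k * b) * (Fmap N m x * m x) := by
    rw [← intervalIntegral.integral_sub
      (Continuous.intervalIntegrable (by have := hu.continuous; fun_prop) _ _)
      (Continuous.intervalIntegrable (by have := hw.continuous; fun_prop) _ _)]
    refine intervalIntegral.integral_congr fun x _ => ?_
    have h1 : u x - w x = k * b * Fmap N m x := by rw [hrec x]; ring
    have h2 : u x + w x = 2 * m x := by simp [hm_def]; ring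
    have : (u x)^2 - (w x)^2 = (u x - w x) * (u x + w x) := by ring
    rw [this, h1, h2]
    ring
  rw [intervalIntegral.integral_const_mul] at hdiff
  have hzero : L2inner (Fmap N m) m = 0 := L2inner_F_self hm
  unfold L2inner at hzero
  rw [hzero, mul_zero] at hdiff
  linarith

/-- L²-conservation of one step of the `s`-stage IMR-composition scheme:
`‖Y^{n,i}‖ = ‖Uⁿ‖` for `1 ≤ i ≤ s`, and in particular `‖U^{n+1}‖ = ‖Uⁿ‖`. -/
theorem composition_L2_conservation
    (N : ℕ) (hN : 1 ≤ N) (k : ℝ) (hk : 0 < k) (s : ℕ) (hs : 1 ≤ s)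
    (b : ℕ → ℝ) (hb : ∀ i, 1 ≤ i → i ≤ s → b i ≠ 0)
    (Un Un1 : ℝ → ℝ) (Y : ℕ → ℝ → ℝ)
    (hUn : InSN N Un) (hYSN : ∀ i ≤ s, InSN N (Y i))
    (hY0 : ∀ x : ℝ, Y 0 x = Un x)
    (hrec : ∀ i, 1 ≤ i → i ≤ s → ∀ x : ℝ,
      Y i x = Y (i-1) x + k * b i * Fmap N (fun y => (Y i y + Y (i-1) y) / 2) x)
    (hUn1 : ∀ x : ℝ, Un1 x = Y s x) :
    (∀ i, 1 ≤ i → i ≤ s → L2norm (Y i) = L2norm Un) ∧ L2norm Un1 = L2norm Un := by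
  have key : ∀ i, i ≤ s →
      (∫ x in (-Real.pi)..Real.pi, (Y i x)^2) = ∫ x in (-Real.pi)..Real.pi, (Un x)^2 := by
    intro i
    induction i with
    | zero => intro _; simp only [hY0]
    | succ n ih =>
      intro hle
      obtain ⟨cu, hcu⟩ := hYSN (n+1) hle
      obtain ⟨cw, hcw⟩ := hYSN n (by omega)
      have hu : Rep N (Y (n+1)) cu := hcu
      have hw : Rep N (Y n) cw := hcw
      have hrec' := hrec (n+1) (by omega) hle
      simp only [Nat.add_sub_cancel] at hrec'
      rw [step_sq hu hw hrec', ih (by omega)]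
  refine ⟨fun i _ h2 => ?_, ?_⟩
  · unfold L2norm
    rw [key i h2]
  · unfold L2norm
    simp only [hUn1]
    rw [key s le_rfl]

end KdVSpec
end
end
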